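/- Fix positive integers m and n with n ≥ 2, set γ = 2(m+n+1)/(n−1), and for R > 1 define T_R = {x ∈ ℝⁿ : t := (x₁+⋯+xₙ)/n > R and |xⱼ − t| < e^{−γt} for all j = 1,…,n}. Then for every multi-index α ∈ ℕⁿ there exist constants C̃_α, C_α > 0, depending only on α, m, n (and independent of R), such that, as elements of [0,∞], C̃_α ∫_R^∞ e^{2(|α|−m−1)u} du ≤ ∫_{T_R} e^{2⟨α+𝟏,x⟩} dx ≤ C_α ∫_R^∞ e^{2(|α|−m−1)u} du. Consequently: (i) if |α| ≤ m then ∫_{T_R} e^{2⟨α+𝟏,x⟩} dx < ∞ and this integral tends to 0 as R → ∞; (ii) if |α| ≥ m+1 then ∫_{T_R} e^{2⟨α+𝟏,x⟩} dx = +∞. -/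

import Mathlib

open MeasureTheory Real ENNReal

/-- The tail domain `T_R` with `γ = 2(m+n+1)/(n−1)`:
`T_R = {x ∈ ℝⁿ : t := (x₁+⋯+xₙ)/n > R, |xⱼ − t| < e^{−γt} for all j}`. -/
def tailSet (m n : ℕ) (R : ℝ) : Set (Fin n → ℝ) :=
  {x | R < (∑ j, x j) / n ∧
    ∀ j, |x j - (∑ j, x j) / n| <
      Real.exp (-(2 * ((m : ℝ) + n + 1) / ((n : ℝ) - 1)) * ((∑ j, x j) / n))}

/-- `∫_{T_R} e^{2⟨α+𝟏,x⟩} dx`, as an element of `[0,∞]`. -/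
noncomputable def tailIntegral (m n : ℕ) (α : Fin n → ℕ) (R : ℝ) : ℝ≥0∞ :=
  ∫⁻ x in tailSet m n R, ENNReal.ofReal (Real.exp (2 * ∑ j, ((α j : ℝ) + 1) * x j))

open Set Filter

lemma measurableSet_box (k : ℕ) (a : ℝ) (η : ℝ → ℝ) (hη : Measurable η) :
    MeasurableSet {x : Fin (k+1) → ℝ |
      a < x 0 ∧ ∀ i : Fin k, x i.succ ∈ Set.Ioo (x 0 - η (x 0)) (x 0 + η (x 0))} := by
  have h0 : Measurable (fun x : Fin (k+1) → ℝ => x 0) := measurable_pi_apply 0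
  rw [Set.setOf_and, Set.setOf_forall]
  refine ((measurableSet_lt measurable_const h0).inter (MeasurableSet.iInter fun i => ?_))
  have hi : Measurable (fun x : Fin (k+1) → ℝ => x i.succ) := measurable_pi_apply i.succ
  exact (measurableSet_lt (h0.sub (hη.comp h0)) hi).inter
    (measurableSet_lt hi (h0.add (hη.comp h0)))

lemma lintegral_box (k : ℕ) (g : ℝ → ℝ≥0∞) (hg : Measurable g)
    (a : ℝ) (η : ℝ → ℝ) (hη : Measurable η) :
    ∫⁻ x : Fin (k+1) → ℝ in
      {x | a < x 0 ∧ ∀ i : Fin k, x i.succ ∈ Set.Ioo (x 0 - η (x 0)) (x 0 + η (x 0))},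
      g (x 0)
      = ∫⁻ s in Set.Ioi a, g s * (ENNReal.ofReal (2 * η s)) ^ k := by
  classical
  set e := MeasurableEquiv.piFinSuccAbove (fun _ : Fin (k+1) => ℝ) 0 with he
  have hmp := MeasureTheory.volume_preserving_piFinSuccAbove (fun _ : Fin (k+1) => ℝ) 0
  set P : Set (ℝ × (Fin k → ℝ)) :=
    {p | a < p.1 ∧ ∀ i, p.2 i ∈ Set.Ioo (p.1 - η p.1) (p.1 + η p.1)} with hP
  have hPm : MeasurableSet P := by
    rw [hP, Set.setOf_and, Set.setOf_forall]
    refine (measurableSet_lt measurable_const measurable_fst).inter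
      (MeasurableSet.iInter fun i => ?_)
    have hi : Measurable (fun p : ℝ × (Fin k → ℝ) => p.2 i) :=
      (measurable_pi_apply i).comp measurable_snd
    exact (measurableSet_lt (measurable_fst.sub (hη.comp measurable_fst)) hi).inter
      (measurableSet_lt hi (measurable_fst.add (hη.comp measurable_fst)))
  have he1 : ∀ x : Fin (k+1) → ℝ, (e x).1 = x 0 := fun x => rfl
  have he2 : ∀ (x : Fin (k+1) → ℝ) (i : Fin k), (e x).2 i = x i.succ := by
    intro x i
    show x ((0 : Fin (k+1)).succAbove i) = x i.succ
    rw [Fin.zero_succAbove]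
  have hS : {x : Fin (k+1) → ℝ |
      a < x 0 ∧ ∀ i : Fin k, x i.succ ∈ Set.Ioo (x 0 - η (x 0)) (x 0 + η (x 0))} = e ⁻¹' P := by
    ext x
    simp only [Set.mem_preimage, hP, Set.mem_setOf_eq, he1, he2]
  rw [hS]
  have hstep : ∫⁻ x in e ⁻¹' P, g (x 0) = ∫⁻ p in P, g p.1 ∂(volume : Measure (ℝ × (Fin k → ℝ))) := by
    exact hmp.setLIntegral_comp_preimage hPm (f := fun p : ℝ × (Fin k → ℝ) => g p.1)
      (hg.comp measurable_fst)
  rw [hstep]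
  have hfmeas : Measurable (P.indicator (fun p : ℝ × (Fin k → ℝ) => g p.1)) :=
    (hg.comp measurable_fst).indicator hPm
  rw [← lintegral_indicator hPm, Measure.volume_eq_prod, lintegral_prod _ hfmeas.aemeasurable]
  have inner : ∀ s : ℝ,
      (∫⁻ y : Fin k → ℝ, P.indicator (fun p => g p.1) (s, y))
        = (Set.Ioi a).indicator (fun s => g s * (ENNReal.ofReal (2 * η s)) ^ k) s := by
    intro s
    by_cases hs : a < s
    · have hset : (fun y : Fin k → ℝ => P.indicator (fun p => g p.1) (s, y))
          = (Set.pi Set.univ fun _ : Fin k => Set.Ioo (s - η s) (s + η s)).indicator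
            (fun _ => g s) := by
        ext y
        by_cases hy : ∀ i, y i ∈ Set.Ioo (s - η s) (s + η s)
        · rw [Set.indicator_of_mem (by exact ⟨hs, hy⟩), Set.indicator_of_mem (by
            simpa [Set.mem_univ_pi] using hy)]
        · rw [Set.indicator_of_notMem (fun hmem => hy hmem.2), Set.indicator_of_notMem (by
            simpa [Set.mem_univ_pi] using hy)]
      rw [hset, lintegral_indicator_const (MeasurableSet.univ_pi fun _ => measurableSet_Ioo),
        Set.indicator_of_mem (Set.mem_Ioi.mpr hs), volume_pi_pi]
      simp only [Real.volume_Ioo, Finset.prod_const, Finset.card_univ, Fintype.card_fin]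
      have harith : s + η s - (s - η s) = 2 * η s := by ring
      rw [harith]
    · have hzero : (fun y : Fin k → ℝ => P.indicator (fun p => g p.1) (s, y)) = fun _ => 0 := by
        ext y
        exact Set.indicator_of_notMem (fun hmem => hs hmem.1) _
      rw [hzero, lintegral_const, zero_mul]
      exact (Set.indicator_of_notMem (by simpa using hs) _).symm
  rw [lintegral_congr inner, lintegral_indicator measurableSet_Ioi]


lemma lintegral_exp_shift (b a d : ℝ) :
    ∫⁻ s in Set.Ioi (a + d), ENNReal.ofReal (Real.exp (b * s))
      = ENNReal.ofReal (Real.exp (b * d)) *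
        ∫⁻ u in Set.Ioi a, ENNReal.ofReal (Real.exp (b * u)) := by
  have hmp : MeasurePreserving (fun x : ℝ => x + d) volume volume :=
    measurePreserving_add_right volume d
  have hmeas : Measurable fun s : ℝ => ENNReal.ofReal (Real.exp (b * s)) :=
    ENNReal.measurable_ofReal.comp (Real.measurable_exp.comp (measurable_id.const_mul b))
  have h1 := hmp.setLIntegral_comp_preimage (measurableSet_Ioi (a := a + d)) hmeas
  have hpre : (fun x : ℝ => x + d) ⁻¹' (Set.Ioi (a + d)) = Set.Ioi a := by
    ext x; simp
  rw [hpre] at h1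
  rw [← h1, ← lintegral_const_mul _ hmeas]
  refine lintegral_congr fun u => ?_
  rw [← ENNReal.ofReal_mul (Real.exp_pos _).le, ← Real.exp_add]
  ring_nf

lemma lintegral_exp_Ioi_neg {b : ℝ} (hb : b < 0) (a : ℝ) :
    ∫⁻ s in Set.Ioi a, ENNReal.ofReal (Real.exp (b * s))
      = ENNReal.ofReal (Real.exp (b * a) / (-b)) := by
  have hint : IntegrableOn (fun s => Real.exp (b * s)) (Set.Ioi a) := by
    have := exp_neg_integrableOn_Ioi a (neg_pos.mpr hb)
    simpa [neg_neg] using this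
  rw [← ofReal_integral_eq_lintegral_ofReal hint (ae_of_all _ fun s => (Real.exp_pos _).le)]
  congr 1
  have hderiv : ∀ x ∈ Set.Ici a, HasDerivAt (fun s => Real.exp (b * s) / b)
      (Real.exp (b * x)) x := by
    intro x _
    have h1 : HasDerivAt (fun s : ℝ => b * s) b x := by
      simpa using (hasDerivAt_id x).const_mul b
    have h2 := (h1.exp).div_const b
    have hbne : b ≠ 0 := ne_of_lt hb
    rwa [mul_div_cancel_right₀ _ hbne] at h2
  have hlim : Tendsto (fun s => Real.exp (b * s) / b) atTop (nhds 0) := by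
    have h3 : Tendsto (fun s : ℝ => b * s) atTop atBot :=
      Tendsto.const_mul_atTop_of_neg hb tendsto_id
    have := (Real.tendsto_exp_atBot.comp h3).div_const b
    simpa using this
  rw [integral_Ioi_of_hasDerivAt_of_tendsto' hderiv hint hlim]
  rw [zero_sub]
  ring

lemma lintegral_exp_Ioi_top {b : ℝ} (hb : 0 ≤ b) {a : ℝ} (ha : 0 ≤ a) :
    ∫⁻ s in Set.Ioi a, ENNReal.ofReal (Real.exp (b * s)) = ⊤ := by
  rw [eq_top_iff]
  have h1 : volume (Set.Ioi a) ≤ ∫⁻ s in Set.Ioi a, ENNReal.ofReal (Real.exp (b * s)) := by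
    rw [← setLIntegral_one]
    refine setLIntegral_mono' measurableSet_Ioi fun s hs => ?_
    rw [show (1 : ℝ≥0∞) = ENNReal.ofReal 1 by simp]
    exact ENNReal.ofReal_le_ofReal (Real.one_le_exp (by nlinarith [le_of_lt (mem_Ioi.mp hs)]))
  rwa [Real.volume_Ioi] at h1


set_option maxHeartbeats 2000000 in
lemma stmt6_key (m k : ℕ) (hk : 1 ≤ k) (α : Fin (k+1) → ℕ) :
    ∃ Ctil Cα : ℝ, 0 < Ctil ∧ 0 < Cα ∧
      ∀ R : ℝ, 1 < R →
        ENNReal.ofReal Ctil *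
            (∫⁻ u in Set.Ioi R,
              ENNReal.ofReal (Real.exp (2 * (((∑ j, α j : ℕ) : ℝ) - m - 1) * u)))
          ≤ tailIntegral m (k+1) α R ∧
        tailIntegral m (k+1) α R ≤
          ENNReal.ofReal Cα *
            (∫⁻ u in Set.Ioi R,
              ENNReal.ofReal (Real.exp (2 * (((∑ j, α j : ℕ) : ℝ) - m - 1) * u))) := by
  classical
  have hkR : (1:ℝ) ≤ (k:ℝ) := by exact_mod_cast hk
  obtain ⟨γ, hγdef⟩ : ∃ γ : ℝ,
      γ = 2 * ((m : ℝ) + ((k+1 : ℕ) : ℝ) + 1) / (((k+1 : ℕ) : ℝ) - 1) := ⟨_, rfl⟩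
  have hden : (0:ℝ) < ((k+1 : ℕ) : ℝ) - 1 := by push_cast; linarith
  have hγpos : 0 < γ := by
    rw [hγdef]; exact div_pos (by positivity) hden
  have hγk : γ * (k:ℝ) = 2 * ((m:ℝ) + (k:ℝ) + 2) := by
    have hk0 : (k:ℝ) ≠ 0 := by linarith
    rw [hγdef]
    push_cast
    rw [show (k:ℝ) + 1 - 1 = (k:ℝ) from by ring]
    field_simp
    ring
  obtain ⟨σ, hσdef⟩ : ∃ σ : ℝ, σ = ((∑ j, α j : ℕ) : ℝ) := ⟨_, rfl⟩
  obtain ⟨A, hAdef⟩ : ∃ A : ℝ, A = σ + ((k:ℝ) + 1) := ⟨_, rfl⟩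
  obtain ⟨b, hbdef⟩ : ∃ b : ℝ, b = 2 * (σ - m - 1) := ⟨_, rfl⟩
  have hApos : 0 < A := by rw [hAdef, hσdef]; positivity
  have hA : ∑ j, ((α j : ℝ) + 1) = A := by
    rw [Finset.sum_add_distrib, Finset.sum_const, Finset.card_univ, Fintype.card_fin,
      hAdef, hσdef, nsmul_eq_mul]
    push_cast
    ring
  have hbA : b = 2 * A - γ * (k:ℝ) := by
    rw [hbdef, hAdef, hγk]; ring
  have hdecomp : ∀ (x : Fin (k+1) → ℝ) (c : ℝ),
      ∑ j, ((α j : ℝ) + 1) * x j = (∑ j, ((α j : ℝ) + 1) * (x j - c)) + A * c := by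
    intro x c
    rw [← hA, Finset.sum_mul, ← Finset.sum_add_distrib]
    exact Finset.sum_congr rfl fun j _ => by ring
  have hmemT : ∀ (R : ℝ) (x : Fin (k+1) → ℝ), x ∈ tailSet m (k+1) R ↔
      (R < (∑ j, x j) / ((k+1 : ℕ) : ℝ) ∧
        ∀ j, |x j - (∑ j, x j) / ((k+1 : ℕ) : ℝ)| <
          Real.exp (-γ * ((∑ j, x j) / ((k+1 : ℕ) : ℝ)))) := by
    intro R x
    rw [hγdef]
    exact Iff.rfl
  have htmean : Measurable (fun x : Fin (k+1) → ℝ => (∑ j, x j) / ((k+1 : ℕ) : ℝ)) :=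
    (Finset.measurable_sum Finset.univ fun j _ => measurable_pi_apply j).div_const _
  have hT : ∀ R : ℝ, MeasurableSet (tailSet m (k+1) R) := by
    intro R
    have heq : tailSet m (k+1) R = {x : Fin (k+1) → ℝ | R < (∑ j, x j) / ((k+1 : ℕ) : ℝ)} ∩
        ⋂ j, {x : Fin (k+1) → ℝ | |x j - (∑ j, x j) / ((k+1 : ℕ) : ℝ)| <
          Real.exp (-γ * ((∑ j, x j) / ((k+1 : ℕ) : ℝ)))} := by
      ext x
      rw [hmemT]
      simp [Set.mem_iInter, Set.mem_setOf_eq]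
    rw [heq]
    refine (measurableSet_lt measurable_const htmean).inter (MeasurableSet.iInter fun j => ?_)
    exact measurableSet_lt ((measurable_pi_apply j).sub htmean).abs
      (Real.measurable_exp.comp (htmean.const_mul _))
  have hgm : ∀ K c : ℝ, Measurable fun s : ℝ => ENNReal.ofReal (K * Real.exp (c * s)) :=
    fun K c => ENNReal.measurable_ofReal.comp
      ((Real.measurable_exp.comp (measurable_id.const_mul c)).const_mul K)
  obtain ⟨η, hηdef⟩ : ∃ η : ℝ → ℝ,
      η = fun s => 2 * Real.exp γ * Real.exp (-γ * s) := ⟨_, rfl⟩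
  have hηm : Measurable η := by
    rw [hηdef]
    exact (Real.measurable_exp.comp (measurable_id.const_mul (-γ))).const_mul _
  obtain ⟨δ, hδdef⟩ : ∃ δ : ℝ → ℝ,
      δ = fun s => Real.exp (-γ * (s + 1)) / ((k:ℝ) + 1) := ⟨_, rfl⟩
  have hδm : Measurable δ := by
    rw [hδdef]
    exact (Real.measurable_exp.comp ((measurable_id.add_const 1).const_mul (-γ))).div_const _
  obtain ⟨K₁, hK₁⟩ : ∃ K₁ : ℝ, K₁ = Real.exp (4 * A * Real.exp γ) := ⟨_, rfl⟩
  obtain ⟨K₂, hK₂⟩ : ∃ K₂ : ℝ, K₂ = K₁ * (4 * Real.exp γ) ^ k := ⟨_, rfl⟩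
  obtain ⟨K₃, hK₃⟩ : ∃ K₃ : ℝ, K₃ = Real.exp (-(2 * A)) := ⟨_, rfl⟩
  obtain ⟨K₄, hK₄⟩ : ∃ K₄ : ℝ, K₄ = K₃ * (2 * Real.exp (-γ) / ((k:ℝ) + 1)) ^ k := ⟨_, rfl⟩
  have hK₂pos : 0 < K₂ := by rw [hK₂, hK₁]; positivity
  have hK₄pos : 0 < K₄ := by rw [hK₄, hK₃]; positivity
  refine ⟨K₄ * Real.exp (b * 1), K₂ * Real.exp (b * (-1)),
    mul_pos hK₄pos (Real.exp_pos _), mul_pos hK₂pos (Real.exp_pos _), ?_⟩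
  intro R hR
  simp only [← hσdef, ← hbdef]
  constructor
  · -- LOWER BOUND
    obtain ⟨S, hSdef⟩ : ∃ S : Set (Fin (k+1) → ℝ), S = {x | R + 1 < x 0 ∧
        ∀ i : Fin k, x i.succ ∈ Set.Ioo (x 0 - δ (x 0)) (x 0 + δ (x 0))} := ⟨_, rfl⟩
    have hSm : MeasurableSet S := by rw [hSdef]; exact measurableSet_box k (R+1) δ hδm
    have hSsub : ∀ x ∈ S, x ∈ tailSet m (k+1) R ∧
        K₃ * Real.exp (2 * A * x 0) ≤ Real.exp (2 * ∑ j, ((α j : ℝ) + 1) * x j) := by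
      intro x hx
      rw [hSdef] at hx
      obtain ⟨hx0, hbox⟩ := hx
      have hx0R : R + 1 < x 0 := hx0
      have hexplt : Real.exp (-γ * (x 0 + 1)) < 1 := by
        rw [Real.exp_lt_one_iff]; nlinarith
      have hδpos : 0 < δ (x 0) := by simp only [hδdef]; positivity
      have hδlt : δ (x 0) < 1 := by
        simp only [hδdef]
        rw [div_lt_one (by positivity)]
        nlinarith
      have hj : ∀ j, |x j - x 0| < δ (x 0) := by
        intro j
        induction j using Fin.cases with
        | zero => simpa using hδpos
        | succ i =>
          have hi := hbox i
          rw [Set.mem_Ioo] at hi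
          rw [abs_lt]; constructor <;> linarith [hi.1, hi.2]
      obtain ⟨t, htdef⟩ : ∃ t : ℝ, t = (∑ j, x j) / ((k+1 : ℕ) : ℝ) := ⟨_, rfl⟩
      have hts : t - x 0 = (∑ j, (x j - x 0)) / ((k+1 : ℕ) : ℝ) := by
        rw [htdef, Finset.sum_sub_distrib, Finset.sum_const, Finset.card_univ,
          Fintype.card_fin, nsmul_eq_mul]
        field_simp
      have habs_t : |t - x 0| < δ (x 0) := by
        rw [hts, abs_div, abs_of_pos (show (0:ℝ) < ((k+1:ℕ):ℝ) by positivity),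
          div_lt_iff₀ (show (0:ℝ) < ((k+1:ℕ):ℝ) by positivity)]
        calc |∑ j, (x j - x 0)| ≤ ∑ j, |x j - x 0| := Finset.abs_sum_le_sum_abs _ _
          _ < ∑ _j : Fin (k+1), δ (x 0) :=
              Finset.sum_lt_sum_of_nonempty Finset.univ_nonempty (fun j _ => hj j)
          _ = δ (x 0) * ((k+1:ℕ):ℝ) := by
              rw [Finset.sum_const, Finset.card_univ, Fintype.card_fin, nsmul_eq_mul]
              push_cast
              ring
      have htR : R < t := by
        have h' := abs_lt.mp habs_t
        linarith [h'.1]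
      have ht_up : t < x 0 + 1 := by
        have h' := abs_lt.mp habs_t
        linarith [h'.2]
      have h2δ : 2 * δ (x 0) ≤ Real.exp (-γ * (x 0 + 1)) := by
        simp only [hδdef]
        rw [← mul_div_assoc, div_le_iff₀ (by positivity)]
        nlinarith [Real.exp_pos (-γ * (x 0 + 1))]
      have hcond2 : ∀ j, |x j - t| < Real.exp (-γ * t) := by
        intro j
        have h1 : |x j - t| ≤ |x j - x 0| + |x 0 - t| := abs_sub_le _ _ _
        have h2 : |x 0 - t| = |t - x 0| := abs_sub_comm _ _
        have h3 : Real.exp (-γ * (x 0 + 1)) < Real.exp (-γ * t) := by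
          apply Real.exp_lt_exp.mpr; nlinarith
        calc |x j - t| ≤ |x j - x 0| + |x 0 - t| := h1
          _ < δ (x 0) + δ (x 0) := by rw [h2]; linarith [hj j, habs_t]
          _ = 2 * δ (x 0) := by ring
          _ ≤ Real.exp (-γ * (x 0 + 1)) := h2δ
          _ < Real.exp (-γ * t) := h3
      rw [htdef] at htR hcond2
      refine ⟨(hmemT R x).mpr ⟨htR, hcond2⟩, ?_⟩
      have hterm : ∀ j : Fin (k+1), ((α j : ℝ) + 1) * (-1) ≤ ((α j : ℝ) + 1) * (x j - x 0) := by
        intro j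
        apply mul_le_mul_of_nonneg_left _ (by positivity)
        have h' := abs_lt.mp (hj j)
        linarith [h'.1, hδlt]
      have hsumge : -A ≤ ∑ j, ((α j : ℝ) + 1) * (x j - x 0) := by
        calc -A = ∑ j, ((α j : ℝ) + 1) * (-1) := by
              rw [← Finset.sum_mul, hA]; ring
          _ ≤ _ := Finset.sum_le_sum fun j _ => hterm j
      rw [hK₃, ← Real.exp_add]
      apply Real.exp_le_exp.mpr
      rw [hdecomp x (x 0)]
      nlinarith [hsumge]
    have step1 : ∫⁻ x in S, ENNReal.ofReal (K₃ * Real.exp (2 * A * x 0)) ≤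
        tailIntegral m (k+1) α R := by
      unfold tailIntegral
      rw [← lintegral_indicator (hT R), ← lintegral_indicator hSm]
      apply lintegral_mono
      intro x
      by_cases hx : x ∈ S
      · rw [Set.indicator_of_mem hx, Set.indicator_of_mem (hSsub x hx).1]
        exact ENNReal.ofReal_le_ofReal (hSsub x hx).2
      · rw [Set.indicator_of_notMem hx]; exact zero_le
    have step2 : ∫⁻ x in S, ENNReal.ofReal (K₃ * Real.exp (2 * A * x 0)) =
        ∫⁻ s in Set.Ioi (R+1),
          ENNReal.ofReal (K₃ * Real.exp (2 * A * s)) * (ENNReal.ofReal (2 * δ s)) ^ k := by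
      rw [hSdef]
      exact lintegral_box k _ (hgm K₃ (2*A)) (R+1) δ hδm
    have step3 : ∀ s : ℝ,
        ENNReal.ofReal (K₃ * Real.exp (2 * A * s)) * (ENNReal.ofReal (2 * δ s)) ^ k =
          ENNReal.ofReal K₄ * ENNReal.ofReal (Real.exp (b * s)) := by
      intro s
      have hδval : 2 * δ s = (2 * Real.exp (-γ) / ((k:ℝ)+1)) * Real.exp (-γ * s) := by
        simp only [hδdef]
        rw [show -γ * (s + 1) = -γ + -γ * s from by ring, Real.exp_add]
        ring
      rw [hδval, ← ENNReal.ofReal_pow (by positivity),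
        ← ENNReal.ofReal_mul (show (0:ℝ) ≤ K₃ * Real.exp (2 * A * s) from by rw [hK₃]; positivity),
        ← ENNReal.ofReal_mul (le_of_lt hK₄pos)]
      congr 1
      rw [mul_pow, ← Real.exp_nat_mul, hK₄]
      rw [show b * s = 2 * A * s + (k:ℝ) * (-γ * s) from by rw [hbA]; ring, Real.exp_add]
      ring
    have step4 : ∫⁻ s in Set.Ioi (R+1), ENNReal.ofReal (Real.exp (b * s)) =
        ENNReal.ofReal (Real.exp (b * 1)) *
          ∫⁻ u in Set.Ioi R, ENNReal.ofReal (Real.exp (b * u)) :=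
      lintegral_exp_shift b R 1
    calc ENNReal.ofReal (K₄ * Real.exp (b * 1)) *
          ∫⁻ u in Set.Ioi R, ENNReal.ofReal (Real.exp (b * u))
        = ENNReal.ofReal K₄ * (ENNReal.ofReal (Real.exp (b * 1)) *
            ∫⁻ u in Set.Ioi R, ENNReal.ofReal (Real.exp (b * u))) := by
          rw [← mul_assoc, ← ENNReal.ofReal_mul (le_of_lt hK₄pos)]
      _ = ENNReal.ofReal K₄ * ∫⁻ s in Set.Ioi (R+1), ENNReal.ofReal (Real.exp (b * s)) := by
          rw [step4]
      _ = ∫⁻ s in Set.Ioi (R+1), ENNReal.ofReal K₄ * ENNReal.ofReal (Real.exp (b * s)) := by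
          rw [lintegral_const_mul _ (by simpa using hgm 1 b)]
      _ = ∫⁻ s in Set.Ioi (R+1),
            ENNReal.ofReal (K₃ * Real.exp (2 * A * s)) * (ENNReal.ofReal (2 * δ s)) ^ k :=
          lintegral_congr fun s => (step3 s).symm
      _ = ∫⁻ x in S, ENNReal.ofReal (K₃ * Real.exp (2 * A * x 0)) := step2.symm
      _ ≤ tailIntegral m (k+1) α R := step1
  · -- UPPER BOUND
    obtain ⟨U, hUdef⟩ : ∃ U : Set (Fin (k+1) → ℝ), U = {x | R - 1 < x 0 ∧
        ∀ i : Fin k, x i.succ ∈ Set.Ioo (x 0 - η (x 0)) (x 0 + η (x 0))} := ⟨_, rfl⟩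
    have hUm : MeasurableSet U := by rw [hUdef]; exact measurableSet_box k (R-1) η hηm
    have hUsub : ∀ x ∈ tailSet m (k+1) R, x ∈ U ∧
        Real.exp (2 * ∑ j, ((α j : ℝ) + 1) * x j) ≤ K₁ * Real.exp (2 * A * x 0) := by
      intro x hx
      obtain ⟨htR, habs⟩ := (hmemT R x).mp hx
      obtain ⟨t, htdef⟩ : ∃ t : ℝ, t = (∑ j, x j) / ((k+1 : ℕ) : ℝ) := ⟨_, rfl⟩
      rw [← htdef] at htR habs
      have ht1 : 1 < t := lt_trans hR htR
      have hexp1 : Real.exp (-γ * t) < 1 := by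
        rw [Real.exp_lt_one_iff]; nlinarith
      have h0t := abs_lt.mp (lt_trans (habs 0) hexp1)
      have hx0R : R - 1 < x 0 := by linarith [h0t.1]
      have hmono : 2 * Real.exp (-γ * t) < η (x 0) := by
        simp only [hηdef]
        have hlt : Real.exp (-γ * t) < Real.exp γ * Real.exp (-γ * x 0) := by
          rw [← Real.exp_add]
          apply Real.exp_lt_exp.mpr
          nlinarith [h0t.2]
        nlinarith [Real.exp_pos (-γ * t)]
      have hallj : ∀ j, |x j - x 0| < 2 * Real.exp (-γ * t) := by
        intro j
        have h1 : |x j - x 0| ≤ |x j - t| + |t - x 0| := abs_sub_le _ _ _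
        have h2 : |t - x 0| = |x 0 - t| := abs_sub_comm _ _
        rw [h2] at h1
        linarith [habs j, habs 0]
      have hmemU : x ∈ U := by
        rw [hUdef]
        refine ⟨hx0R, fun i => ?_⟩
        have h' := abs_lt.mp (lt_trans (hallj i.succ) hmono)
        rw [Set.mem_Ioo]
        constructor <;> linarith [h'.1, h'.2]
      refine ⟨hmemU, ?_⟩
      have hexpγ : (1:ℝ) ≤ Real.exp γ := Real.one_le_exp (le_of_lt hγpos)
      have hterm : ∀ j : Fin (k+1),
          ((α j : ℝ) + 1) * (x j - x 0) ≤ ((α j : ℝ) + 1) * (2 * Real.exp γ) := by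
        intro j
        apply mul_le_mul_of_nonneg_left _ (by positivity)
        have h1 := lt_trans (lt_of_le_of_lt (le_abs_self _) (hallj j))
          (show 2 * Real.exp (-γ * t) < 2 * Real.exp γ from by nlinarith)
        linarith
      have hsumle : ∑ j, ((α j : ℝ) + 1) * (x j - x 0) ≤ A * (2 * Real.exp γ) := by
        calc ∑ j, ((α j : ℝ) + 1) * (x j - x 0)
            ≤ ∑ j, ((α j : ℝ) + 1) * (2 * Real.exp γ) := Finset.sum_le_sum fun j _ => hterm j
          _ = A * (2 * Real.exp γ) := by rw [← Finset.sum_mul, hA]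
      rw [hK₁, ← Real.exp_add]
      apply Real.exp_le_exp.mpr
      rw [hdecomp x (x 0)]
      nlinarith [hsumle]
    have step1 : tailIntegral m (k+1) α R ≤
        ∫⁻ x in U, ENNReal.ofReal (K₁ * Real.exp (2 * A * x 0)) := by
      unfold tailIntegral
      rw [← lintegral_indicator (hT R), ← lintegral_indicator hUm]
      apply lintegral_mono
      intro x
      by_cases hx : x ∈ tailSet m (k+1) R
      · rw [Set.indicator_of_mem hx, Set.indicator_of_mem (hUsub x hx).1]
        exact ENNReal.ofReal_le_ofReal (hUsub x hx).2
      · rw [Set.indicator_of_notMem hx]; exact zero_le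
    have step2 : ∫⁻ x in U, ENNReal.ofReal (K₁ * Real.exp (2 * A * x 0)) =
        ∫⁻ s in Set.Ioi (R-1),
          ENNReal.ofReal (K₁ * Real.exp (2 * A * s)) * (ENNReal.ofReal (2 * η s)) ^ k := by
      rw [hUdef]
      exact lintegral_box k _ (hgm K₁ (2*A)) (R-1) η hηm
    have step3 : ∀ s : ℝ,
        ENNReal.ofReal (K₁ * Real.exp (2 * A * s)) * (ENNReal.ofReal (2 * η s)) ^ k =
          ENNReal.ofReal K₂ * ENNReal.ofReal (Real.exp (b * s)) := by
      intro s
      have hηval : 2 * η s = (4 * Real.exp γ) * Real.exp (-γ * s) := by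
        simp only [hηdef]; ring
      have hK₁pos : 0 < K₁ := by rw [hK₁]; positivity
      rw [hηval, ← ENNReal.ofReal_pow (by positivity),
        ← ENNReal.ofReal_mul (show (0:ℝ) ≤ K₁ * Real.exp (2 * A * s) from by rw [hK₁]; positivity),
        ← ENNReal.ofReal_mul (le_of_lt hK₂pos)]
      congr 1
      rw [mul_pow, ← Real.exp_nat_mul, hK₂, hK₁]
      rw [show b * s = 2 * A * s + (k:ℝ) * (-γ * s) from by rw [hbA]; ring, Real.exp_add]
      ring
    have step4 : ∫⁻ s in Set.Ioi (R-1), ENNReal.ofReal (Real.exp (b * s)) =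
        ENNReal.ofReal (Real.exp (b * (-1))) *
          ∫⁻ u in Set.Ioi R, ENNReal.ofReal (Real.exp (b * u)) := by
      rw [show R - 1 = R + (-1) from by ring]
      exact lintegral_exp_shift b R (-1)
    calc tailIntegral m (k+1) α R
        ≤ ∫⁻ x in U, ENNReal.ofReal (K₁ * Real.exp (2 * A * x 0)) := step1
      _ = ∫⁻ s in Set.Ioi (R-1),
            ENNReal.ofReal (K₁ * Real.exp (2 * A * s)) * (ENNReal.ofReal (2 * η s)) ^ k := step2
      _ = ∫⁻ s in Set.Ioi (R-1), ENNReal.ofReal K₂ * ENNReal.ofReal (Real.exp (b * s)) :=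
          lintegral_congr fun s => step3 s
      _ = ENNReal.ofReal K₂ * ∫⁻ s in Set.Ioi (R-1), ENNReal.ofReal (Real.exp (b * s)) := by
          rw [lintegral_const_mul _ (by simpa using hgm 1 b)]
      _ = ENNReal.ofReal K₂ * (ENNReal.ofReal (Real.exp (b * (-1))) *
            ∫⁻ u in Set.Ioi R, ENNReal.ofReal (Real.exp (b * u))) := by rw [step4]
      _ = ENNReal.ofReal (K₂ * Real.exp (b * (-1))) *
            ∫⁻ u in Set.Ioi R, ENNReal.ofReal (Real.exp (b * u)) := by
          rw [← mul_assoc, ← ENNReal.ofReal_mul (le_of_lt hK₂pos)]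

/-- For `n ≥ 2` and any multi-index `α ∈ ℕⁿ` there are constants
`C̃_α, C_α > 0` independent of `R` such that, for all `R > 1`,
`C̃_α ∫_R^∞ e^{2(|α|−m−1)u} du ≤ ∫_{T_R} e^{2⟨α+𝟏,x⟩} dx ≤ C_α ∫_R^∞ e^{2(|α|−m−1)u} du`
in `[0,∞]`. Consequently: (i) if `|α| ≤ m` the integral is finite and tends to `0` as
`R → ∞`; (ii) if `|α| ≥ m+1` the integral is `+∞`. -/
theorem stmt6 (m n : ℕ) (hm : 0 < m) (hn : 2 ≤ n) (α : Fin n → ℕ) :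
    (∃ Ctil Cα : ℝ, 0 < Ctil ∧ 0 < Cα ∧
      ∀ R : ℝ, 1 < R →
        ENNReal.ofReal Ctil *
            (∫⁻ u in Set.Ioi R,
              ENNReal.ofReal (Real.exp (2 * (((∑ j, α j : ℕ) : ℝ) - m - 1) * u)))
          ≤ tailIntegral m n α R ∧
        tailIntegral m n α R ≤
          ENNReal.ofReal Cα *
            (∫⁻ u in Set.Ioi R,
              ENNReal.ofReal (Real.exp (2 * (((∑ j, α j : ℕ) : ℝ) - m - 1) * u)))) ∧
    ((∑ j, α j ≤ m →
        (∀ R : ℝ, 1 < R → tailIntegral m n α R < ⊤) ∧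
        Filter.Tendsto (tailIntegral m n α) Filter.atTop (nhds 0)) ∧
      (m + 1 ≤ ∑ j, α j → ∀ R : ℝ, 1 < R → tailIntegral m n α R = ⊤)) := by
  obtain ⟨k, rfl⟩ : ∃ k, n = k + 1 := ⟨n - 1, by omega⟩
  obtain ⟨Ctil, Cα, hCtil, hCα, hbound⟩ := stmt6_key m k (by omega) α
  refine ⟨⟨Ctil, Cα, hCtil, hCα, hbound⟩, ?_, ?_⟩
  · intro hle
    have hble : 2 * (((∑ j, α j : ℕ) : ℝ) - m - 1) < 0 := by
      have h1 : ((∑ j, α j : ℕ) : ℝ) ≤ (m : ℝ) := by exact_mod_cast hle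
      linarith
    constructor
    · intro R hR
      have h2 := (hbound R hR).2
      rw [lintegral_exp_Ioi_neg hble R] at h2
      exact lt_of_le_of_lt h2
        (ENNReal.mul_lt_top ENNReal.ofReal_lt_top ENNReal.ofReal_lt_top)
    · have hG : Filter.Tendsto (fun R : ℝ => ENNReal.ofReal Cα *
          ENNReal.ofReal (Real.exp (2 * (((∑ j, α j : ℕ) : ℝ) - m - 1) * R) /
            (-(2 * (((∑ j, α j : ℕ) : ℝ) - m - 1))))) Filter.atTop (nhds 0) := by
        have h1 : Filter.Tendsto (fun R : ℝ => 2 * (((∑ j, α j : ℕ) : ℝ) - m - 1) * R)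
            Filter.atTop Filter.atBot :=
          Filter.Tendsto.const_mul_atTop_of_neg hble Filter.tendsto_id
        have h2 : Filter.Tendsto (fun R : ℝ =>
            Real.exp (2 * (((∑ j, α j : ℕ) : ℝ) - m - 1) * R) /
              (-(2 * (((∑ j, α j : ℕ) : ℝ) - m - 1)))) Filter.atTop (nhds 0) := by
          have h3 := (Real.tendsto_exp_atBot.comp h1).div_const
            (-(2 * (((∑ j, α j : ℕ) : ℝ) - m - 1)))
          simpa using h3
        have h4 := ENNReal.tendsto_ofReal (a := 0) h2
        rw [ENNReal.ofReal_zero] at h4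
        have h5 := ENNReal.Tendsto.const_mul (a := ENNReal.ofReal Cα) h4 (Or.inr ENNReal.ofReal_ne_top)
        simpa using h5
      refine tendsto_of_tendsto_of_tendsto_of_le_of_le' tendsto_const_nhds hG ?_ ?_
      · exact Filter.Eventually.of_forall fun R => zero_le
      · filter_upwards [Filter.eventually_gt_atTop 1] with R hR
        have h2 := (hbound R hR).2
        rwa [lintegral_exp_Ioi_neg hble R] at h2
  · intro hge R hR
    have hbge : 0 ≤ 2 * (((∑ j, α j : ℕ) : ℝ) - m - 1) := by
      have h1 : (m : ℝ) + 1 ≤ ((∑ j, α j : ℕ) : ℝ) := by exact_mod_cast hge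
      linarith
    have h1 := (hbound R hR).1
    rw [lintegral_exp_Ioi_top hbge (by linarith : (0:ℝ) ≤ R)] at h1
    rw [ENNReal.mul_top (by simp only [ne_eq, ENNReal.ofReal_eq_zero, not_le]; linarith)] at h1
    exact top_le_iff.mp h1
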